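/- Let (S, 𝒮, μ) be an atomless measure space, J ≥ 1, sets A_j ∈ 𝒮 with 0 < μ(A_j) < ∞ for 1 ≤ j ≤ J, and a sequence c_k ↓ 0 of positive reals. Then there exist increasing sequences of measurable sets (A_j^n)_{n≥1} with A_j^n ↑ A_j as n → ∞ for each j, a subsequence (c_{k(n)}), and nonnegative integers m_{jn} such that 0 < μ(A_j \ A_j^n) ≤ c_{k(n)} and μ(A_j^n) = m_{jn} · c_{k(n)} for all j and n. -/

import Mathlib

open MeasureTheory
open scoped ENNReal

/-- A measure is atomless if every set of positive measure has a measurable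
subset of strictly smaller positive measure. -/
def Atomless {S : Type*} [MeasurableSpace S] (μ : Measure S) : Prop :=
  ∀ M : Set S, MeasurableSet M → 0 < μ M →
    ∃ C, C ⊆ M ∧ MeasurableSet C ∧ 0 < μ C ∧ μ C < μ M


section Aux

variable {S : Type*} [MeasurableSpace S] {μ : Measure S}

lemma atomless_half (hμ : Atomless μ) {M : Set S} (hM : MeasurableSet M)
    (h0 : 0 < μ M) (hfin : μ M ≠ ⊤) :
    ∃ C, C ⊆ M ∧ MeasurableSet C ∧ 0 < μ C ∧ μ C ≤ μ M / 2 := by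
  obtain ⟨C, hCM, hCm, hC0, hClt⟩ := hμ M hM h0
  have hCfin : μ C ≠ ⊤ := (hClt.trans_le le_top).ne_top
  by_cases h : μ C ≤ μ M / 2
  · exact ⟨C, hCM, hCm, hC0, h⟩
  · push_neg at h
    refine ⟨M \ C, Set.diff_subset, hM.diff hCm, ?_, ?_⟩
    · rw [measure_diff hCM hCm.nullMeasurableSet hCfin]
      exact tsub_pos_of_lt hClt
    · rw [measure_diff hCM hCm.nullMeasurableSet hCfin]
      calc μ M - μ C ≤ μ M - μ M / 2 := tsub_le_tsub_left h.le _
        _ = μ M / 2 := ENNReal.sub_half hfin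

lemma atomless_small (hμ : Atomless μ) {M : Set S} (hM : MeasurableSet M)
    (h0 : 0 < μ M) (hfin : μ M ≠ ⊤) {ε : ℝ≥0∞} (hε : 0 < ε) :
    ∃ C, C ⊆ M ∧ MeasurableSet C ∧ 0 < μ C ∧ μ C ≤ ε := by
  have key : ∀ n : ℕ, ∃ C, C ⊆ M ∧ MeasurableSet C ∧ 0 < μ C ∧ μ C ≤ μ M * 2⁻¹ ^ n := by
    intro n
    induction n with
    | zero => exact ⟨M, subset_rfl, hM, h0, by simp⟩
    | succ n ih =>
      obtain ⟨C, hCM, hCm, hC0, hCle⟩ := ih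
      have hCfin : μ C ≠ ⊤ := ((measure_mono hCM).trans_lt hfin.lt_top).ne
      obtain ⟨D, hDC, hDm, hD0, hDle⟩ := atomless_half hμ hCm hC0 hCfin
      refine ⟨D, hDC.trans hCM, hDm, hD0, ?_⟩
      calc μ D ≤ μ C / 2 := hDle
        _ ≤ μ M * 2⁻¹ ^ n / 2 := by gcongr
        _ = μ M * 2⁻¹ ^ (n + 1) := by
          rw [pow_succ, ← mul_assoc, div_eq_mul_inv]
  obtain ⟨n, hn⟩ := ENNReal.exists_inv_two_pow_lt
    (show ε / μ M ≠ 0 from (ENNReal.div_pos hε.ne' hfin).ne')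
  obtain ⟨C, h1, h2, h3, h4⟩ := key n
  refine ⟨C, h1, h2, h3, h4.trans ?_⟩
  rw [mul_comm]
  exact ENNReal.mul_le_of_le_div hn.le

lemma atomless_ivt (hμ : Atomless μ) {A : Set S} (hA : MeasurableSet A)
    (hfin : μ A ≠ ⊤) {t : ℝ≥0∞} (ht : t ≤ μ A) :
    ∃ C, C ⊆ A ∧ MeasurableSet C ∧ μ C = t := by
  have htfin : t ≠ ⊤ := (ht.trans_lt hfin.lt_top).ne
  set Good : Set S → Prop := fun C => C ⊆ A ∧ MeasurableSet C ∧ μ C ≤ t with hGood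
  set s : Set S → ℝ≥0∞ := fun C => ⨆ (D : Set S) (_ : Good D ∧ C ⊆ D), μ D with hs
  have hs_le : ∀ C, s C ≤ t := fun C => iSup₂_le fun D hD => hD.1.2.2
  have step : ∀ C, Good C → ∃ D, Good D ∧ C ⊆ D ∧ (μ C + s C) / 2 ≤ μ D := by
    intro C hC
    rcases le_or_gt (s C) (μ C) with h | h
    · refine ⟨C, hC, subset_rfl, ?_⟩
      calc (μ C + s C) / 2 ≤ (μ C + μ C) / 2 := by gcongr
        _ = μ C := by
          rw [← two_mul, mul_div_assoc, ENNReal.mul_div_cancel two_ne_zero ENNReal.ofNat_ne_top]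
    · have hmid : (μ C + s C) / 2 < s C := by
        rw [ENNReal.div_lt_iff (Or.inl two_ne_zero) (Or.inl ENNReal.ofNat_ne_top), mul_two]
        exact ENNReal.add_lt_add_right ((hs_le C).trans_lt htfin.lt_top).ne h
      obtain ⟨D, hD, hDlt⟩ : ∃ D, (Good D ∧ C ⊆ D) ∧ (μ C + s C) / 2 < μ D := by
        have := hmid
        rw [hs, lt_iSup_iff] at this
        obtain ⟨D, hD⟩ := this
        rw [lt_iSup_iff] at hD
        obtain ⟨hh, hlt⟩ := hD
        exact ⟨D, hh, hlt⟩
      exact ⟨D, hD.1, hD.2, hDlt.le⟩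
  choose F hF1 hF2 hF3 using step
  have good_empty : Good ∅ := ⟨Set.empty_subset _, MeasurableSet.empty, by simp⟩
  let g : ℕ → {C : Set S // Good C} := fun n =>
    Nat.rec ⟨∅, good_empty⟩ (fun _ C => ⟨F C.1 C.2, hF1 C.1 C.2⟩) n
  set Cn : ℕ → Set S := fun n => (g n).1 with hCn
  have hgood : ∀ n, Good (Cn n) := fun n => (g n).2
  have hsub : ∀ n, Cn n ⊆ Cn (n + 1) := fun n => hF2 (Cn n) (hgood n)
  have hstep : ∀ n, (μ (Cn n) + s (Cn n)) / 2 ≤ μ (Cn (n + 1)) :=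
    fun n => hF3 (Cn n) (hgood n)
  have hmono : Monotone Cn := monotone_nat_of_le_succ hsub
  set C : Set S := ⋃ n, Cn n with hC
  have hCA : C ⊆ A := Set.iUnion_subset fun n => (hgood n).1
  have hCm : MeasurableSet C := MeasurableSet.iUnion fun n => (hgood n).2.1
  have hCμ : μ C = ⨆ n, μ (Cn n) :=
    Directed.measure_iUnion (hmono.directed_le)
  have hCt : μ C ≤ t := by
    rw [hCμ]; exact iSup_le fun n => (hgood n).2.2
  refine ⟨C, hCA, hCm, ?_⟩
  by_contra hne
  have hlt : μ C < t := lt_of_le_of_ne hCt hne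
  -- A \ C has positive measure
  have hM0 : 0 < μ (A \ C) := by
    by_contra h
    push_neg at h
    have : μ A ≤ μ C + μ (A \ C) := by
      conv_lhs => rw [← Set.union_diff_cancel hCA]
      exact measure_union_le _ _
    rw [le_zero_iff.mp h, add_zero] at this
    exact absurd (this.trans_lt hlt) (not_lt.mpr ht)
  have hMfin : μ (A \ C) ≠ ⊤ := ((measure_mono Set.diff_subset).trans_lt hfin.lt_top).ne
  have hε : 0 < t - μ C := tsub_pos_of_lt hlt
  obtain ⟨D, hDM, hDm, hD0, hDle⟩ := atomless_small hμ (hA.diff hCm) hM0 hMfin hε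
  -- for each n, s (Cn n) ≥ μ (Cn n) + μ D
  have hkey : ∀ n, μ (Cn n) + μ D ≤ s (Cn n) := by
    intro n
    have hdisj : Disjoint (Cn n) D :=
      Set.disjoint_sdiff_right.mono (Set.subset_iUnion Cn n) hDM
    have hgoodD : Good (Cn n ∪ D) := by
      refine ⟨Set.union_subset (hgood n).1 (hDM.trans Set.diff_subset),
        (hgood n).2.1.union hDm, ?_⟩
      rw [measure_union hdisj hDm]
      calc μ (Cn n) + μ D ≤ μ C + (t - μ C) :=
            add_le_add (measure_mono (Set.subset_iUnion Cn n)) hDle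
        _ = t := add_tsub_cancel_of_le hlt.le
    have : μ (Cn n ∪ D) ≤ s (Cn n) :=
      le_iSup₂_of_le (Cn n ∪ D) ⟨hgoodD, Set.subset_union_left⟩ le_rfl
    rwa [measure_union hdisj hDm] at this
  -- hence μ (Cn (n+1)) ≥ μ (Cn n) + μ D / 2
  have hgrow : ∀ n, μ (Cn n) + μ D / 2 ≤ μ (Cn (n + 1)) := by
    intro n
    refine le_trans ?_ (hstep n)
    have h1 : μ (Cn n) + μ D / 2 ≤ (μ (Cn n) + (μ (Cn n) + μ D)) / 2 := by
      rw [ENNReal.le_div_iff_mul_le (Or.inl two_ne_zero) (Or.inl ENNReal.ofNat_ne_top)]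
      refine le_of_eq ?_
      rw [add_mul, ENNReal.div_mul_cancel two_ne_zero ENNReal.ofNat_ne_top, mul_two]
      ring
    refine h1.trans ?_
    gcongr
    exact hkey n
  have hlin : ∀ n : ℕ, (n : ℝ≥0∞) * (μ D / 2) ≤ μ (Cn n) := by
    intro n
    induction n with
    | zero => simp
    | succ n ih =>
      push_cast
      rw [add_mul, one_mul]
      exact le_trans (add_le_add ih le_rfl) (hgrow n)
  have hD2 : μ D / 2 ≠ 0 := by
    simp only [ne_eq, ENNReal.div_eq_zero_iff]
    push_neg
    exact ⟨hD0.ne', ENNReal.ofNat_ne_top⟩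
  obtain ⟨n, hn⟩ := ENNReal.exists_nat_gt (ENNReal.div_lt_top htfin hD2).ne
  have : t < (n : ℝ≥0∞) * (μ D / 2) := by
    rwa [ENNReal.div_lt_iff (Or.inl hD2) (Or.inr htfin)] at hn
  exact absurd ((this.trans_le (hlin n)).trans_le (hgood n).2.2) (lt_irrefl t)

lemma atomless_chain (hμ : Atomless μ) {A : Set S} (hA : MeasurableSet A)
    (hfin : μ A ≠ ⊤) (t : ℕ → ℝ) (ht0 : ∀ n, 0 ≤ t n) (htmono : Monotone t)
    (htle : ∀ n, ENNReal.ofReal (t n) ≤ μ A) :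
    ∃ B : ℕ → Set S, Monotone B ∧
      ∀ n, B n ⊆ A ∧ MeasurableSet (B n) ∧ μ (B n) = ENNReal.ofReal (t n) := by
  have step : ∀ n (B : Set S), B ⊆ A → MeasurableSet B → μ B = ENNReal.ofReal (t n) →
      ∃ B', B ⊆ B' ∧ B' ⊆ A ∧ MeasurableSet B' ∧ μ B' = ENNReal.ofReal (t (n + 1)) := by
    intro n B hBA hBm hBμ
    have hdiff : μ (A \ B) = μ A - ENNReal.ofReal (t n) := by
      rw [measure_diff hBA hBm.nullMeasurableSet (by rw [hBμ]; exact ENNReal.ofReal_ne_top),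
        hBμ]
    have hle : ENNReal.ofReal (t (n + 1) - t n) ≤ μ (A \ B) := by
      rw [hdiff]
      refine ENNReal.le_sub_of_add_le_left ENNReal.ofReal_ne_top ?_
      rw [← ENNReal.ofReal_add (ht0 n) (sub_nonneg.mpr (htmono (Nat.le_succ n))),
        add_sub_cancel]
      exact htle (n + 1)
    have hdfin : μ (A \ B) ≠ ⊤ := ((measure_mono Set.diff_subset).trans_lt hfin.lt_top).ne
    obtain ⟨D, hDM, hDm, hDμ⟩ := atomless_ivt hμ (hA.diff hBm) hdfin hle
    refine ⟨B ∪ D, Set.subset_union_left, Set.union_subset hBA (hDM.trans Set.diff_subset),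
      hBm.union hDm, ?_⟩
    have hdisj : Disjoint B D := Set.disjoint_sdiff_right.mono_right hDM
    rw [measure_union hdisj hDm, hBμ, hDμ,
      ← ENNReal.ofReal_add (ht0 n) (sub_nonneg.mpr (htmono (Nat.le_succ n))),
      add_sub_cancel]
  obtain ⟨B0, hB0A, hB0m, hB0μ⟩ := atomless_ivt hμ hA hfin (htle 0)
  choose F hF1 hF2 hF3 hF4 using step
  let g : ℕ → {p : ℕ × Set S // p.2 ⊆ A ∧ MeasurableSet p.2 ∧ μ p.2 = ENNReal.ofReal (t p.1)} :=
    fun n => Nat.rec ⟨(0, B0), hB0A, hB0m, hB0μ⟩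
      (fun _ q => ⟨(q.1.1 + 1, F q.1.1 q.1.2 q.2.1 q.2.2.1 q.2.2.2),
        hF2 _ _ _ _ _, hF3 _ _ _ _ _, hF4 _ _ _ _ _⟩) n
  have hfst : ∀ n, (g n).1.1 = n := by
    intro n; induction n with
    | zero => rfl
    | succ n ih => show (g n).1.1 + 1 = n + 1; rw [ih]
  refine ⟨fun n => (g n).1.2, monotone_nat_of_le_succ fun n => ?_, fun n => ?_⟩
  · exact hF1 _ _ _ _ _
  · have h := (g n).2
    rwa [hfst n] at h

end Aux

/-- Approximation of finitely many sets of finite positive measure by increasing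
sequences whose measures are integer multiples of a subsequence of `c_k ↓ 0`. -/
theorem stmt_3 {S : Type*} [MeasurableSpace S] (μ : Measure S) (hμ : Atomless μ)
    (J : ℕ) (hJ : 1 ≤ J) (A : Fin J → Set S)
    (hA : ∀ j, MeasurableSet (A j)) (hA0 : ∀ j, 0 < μ (A j)) (hAfin : ∀ j, μ (A j) < ⊤)
    (c : ℕ → ℝ) (hc_pos : ∀ k, 0 < c k) (hc_anti : Antitone c)
    (hc_lim : Filter.Tendsto c Filter.atTop (nhds 0)) :
    ∃ (B : Fin J → ℕ → Set S) (k : ℕ → ℕ) (m : Fin J → ℕ → ℕ),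
      StrictMono k ∧
      ∀ j, (∀ n, MeasurableSet (B j n)) ∧ Monotone (B j) ∧ (⋃ n, B j n) = A j ∧
        ∀ n, B j n ⊆ A j ∧
          0 < μ (A j \ B j n) ∧ μ (A j \ B j n) ≤ ENNReal.ofReal (c (k n)) ∧
          μ (B j n) = (m j n : ℝ≥0∞) * ENNReal.ofReal (c (k n)) := by
  haveI hne : Nonempty (Fin J) := ⟨⟨0, hJ⟩⟩
  set a : Fin J → ℝ := fun j => (μ (A j)).toReal with ha
  have ha_pos : ∀ j, 0 < a j := fun j => ENNReal.toReal_pos (hA0 j).ne' (hAfin j).ne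
  have haofReal : ∀ j, ENNReal.ofReal (a j) = μ (A j) :=
    fun j => ENNReal.ofReal_toReal (hAfin j).ne
  set mf : ℝ → ℝ → ℕ := fun x y => ⌈x / y⌉₊ - 1 with hmfdef
  have hmf_bounds : ∀ x y : ℝ, 0 < x → 0 < y →
      (mf x y : ℝ) * y < x ∧ x ≤ (mf x y : ℝ) * y + y := by
    intro x y hx hy
    have hq1 : 1 ≤ ⌈x / y⌉₊ := Nat.one_le_ceil_iff.mpr (div_pos hx hy)
    have hcast : (mf x y : ℝ) = (⌈x / y⌉₊ : ℝ) - 1 := by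
      simp only [hmfdef]
      rw [Nat.cast_sub hq1, Nat.cast_one]
    have h1 : (⌈x / y⌉₊ : ℝ) < x / y + 1 :=
      Nat.ceil_lt_add_one (le_of_lt (div_pos hx hy))
    have h2 : x ≤ (⌈x / y⌉₊ : ℝ) * y := (div_le_iff₀ hy).mp (Nat.le_ceil _)
    constructor
    · rw [hcast]
      exact (lt_div_iff₀ hy).mp (by linarith)
    · rw [hcast]; nlinarith
  set gap : Fin J → ℕ → ℝ := fun j κ => a j - (mf (a j) (c κ) : ℝ) * c κ with hgap
  have hgap_pos : ∀ j κ, 0 < gap j κ :=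
    fun j κ => sub_pos.mpr (hmf_bounds (a j) (c κ) (ha_pos j) (hc_pos κ)).1
  have hgap_le : ∀ j κ, gap j κ ≤ c κ := by
    intro j κ
    have := (hmf_bounds (a j) (c κ) (ha_pos j) (hc_pos κ)).2
    simp only [hgap]; linarith
  set minGap : ℕ → ℝ := fun κ => Finset.univ.inf' Finset.univ_nonempty (fun j => gap j κ)
    with hminGap
  have hminGap_pos : ∀ κ, 0 < minGap κ := by
    intro κ
    rw [hminGap]
    simp only [Finset.lt_inf'_iff]
    exact fun j _ => hgap_pos j κ
  have hminGap_le : ∀ j κ, minGap κ ≤ gap j κ :=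
    fun j κ => Finset.inf'_le _ (Finset.mem_univ j)
  have hNex : ∀ κ0 : ℕ, ∃ N, c N < minGap κ0 :=
    fun κ0 => (hc_lim.eventually (gt_mem_nhds (hminGap_pos κ0))).exists
  choose Nf hNf using hNex
  set k : ℕ → ℕ := fun n => Nat.rec 0 (fun _ kn => max (kn + 1) (Nf kn)) n with hk
  have hk_succ : ∀ n, k (n + 1) = max (k n + 1) (Nf (k n)) := fun n => rfl
  have hk_mono : StrictMono k := by
    refine strictMono_nat_of_lt_succ fun n => ?_
    rw [hk_succ]
    exact lt_of_lt_of_le (Nat.lt_succ_self _) (le_max_left _ _)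
  have hck : ∀ n j, c (k (n + 1)) < gap j (k n) := by
    intro n j
    calc c (k (n + 1)) ≤ c (Nf (k n)) := hc_anti (by rw [hk_succ]; exact le_max_right _ _)
      _ < minGap (k n) := hNf (k n)
      _ ≤ gap j (k n) := hminGap_le j (k n)
  set m : Fin J → ℕ → ℕ := fun j n => mf (a j) (c (k n)) with hm
  set T : Fin J → ℕ → ℝ := fun j n => (m j n : ℝ) * c (k n) with hT
  have hT0 : ∀ j n, 0 ≤ T j n :=
    fun j n => mul_nonneg (Nat.cast_nonneg _) (hc_pos _).le
  have hTlt : ∀ j n, T j n < a j :=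
    fun j n => (hmf_bounds (a j) (c (k n)) (ha_pos j) (hc_pos _)).1
  have hTgap : ∀ j n, a j - T j n ≤ c (k n) := fun j n => hgap_le j (k n)
  have hTmono : ∀ j, Monotone (T j) := by
    intro j
    refine monotone_nat_of_le_succ fun n => ?_
    have h1 : a j - T j (n + 1) ≤ c (k (n + 1)) := hTgap j (n + 1)
    have h2 : c (k (n + 1)) < a j - T j n := hck n j
    linarith
  have hTle : ∀ j n, ENNReal.ofReal (T j n) ≤ μ (A j) := by
    intro j n
    rw [← haofReal j]
    exact ENNReal.ofReal_le_ofReal (hTlt j n).le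
  have hchain := fun j => atomless_chain hμ (hA j) (hAfin j).ne (T j) (hT0 j) (hTmono j)
    (hTle j)
  choose B0 hB0mono hB0 using hchain
  set N : Fin J → Set S := fun j => A j \ ⋃ n, B0 j n with hN
  have hB0meas : ∀ j n, MeasurableSet (B0 j n) := fun j n => (hB0 j n).2.1
  have hB0sub : ∀ j n, B0 j n ⊆ A j := fun j n => (hB0 j n).1
  have hB0μ : ∀ j n, μ (B0 j n) = ENNReal.ofReal (T j n) := fun j n => (hB0 j n).2.2
  have hNmeas : ∀ j, MeasurableSet (N j) :=
    fun j => (hA j).diff (MeasurableSet.iUnion fun n => hB0meas j n)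
  have hdiffμ : ∀ j n, μ (A j \ B0 j n) = ENNReal.ofReal (a j - T j n) := by
    intro j n
    rw [measure_diff (hB0sub j n) (hB0meas j n).nullMeasurableSet
      (by rw [hB0μ j n]; exact ENNReal.ofReal_ne_top), hB0μ j n, ← haofReal j,
      ENNReal.ofReal_sub _ (hT0 j n)]
  have htend : Filter.Tendsto (fun n => ENNReal.ofReal (c (k n))) Filter.atTop (nhds 0) := by
    have h1 : Filter.Tendsto (fun n => c (k n)) Filter.atTop (nhds 0) :=
      hc_lim.comp hk_mono.tendsto_atTop
    have := ENNReal.tendsto_ofReal h1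
    simpa using this
  have hN0 : ∀ j, μ (N j) = 0 := by
    intro j
    refine le_antisymm (ge_of_tendsto' htend fun n => ?_) zero_le
    calc μ (N j) ≤ μ (A j \ B0 j n) :=
          measure_mono (Set.diff_subset_diff_right (Set.subset_iUnion (B0 j) n))
      _ = ENNReal.ofReal (a j - T j n) := hdiffμ j n
      _ ≤ ENNReal.ofReal (c (k n)) := ENNReal.ofReal_le_ofReal (hTgap j n)
  refine ⟨fun j n => B0 j n ∪ N j, k, m, hk_mono, fun j => ⟨fun n => (hB0meas j n).union
    (hNmeas j), fun n n' h => Set.union_subset_union_left _ (hB0mono j h), ?_, fun n => ?_⟩⟩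
  · have : (⋃ n, B0 j n ∪ N j) = (⋃ n, B0 j n) ∪ N j := by
      ext x
      simp [Set.mem_iUnion, exists_or]
    rw [this, hN, Set.union_diff_cancel (Set.iUnion_subset fun n => hB0sub j n)]
  · have hdiffeq : A j \ (B0 j n ∪ N j) = (A j \ B0 j n) \ N j := by
      rw [← Set.diff_diff]
    refine ⟨Set.union_subset (hB0sub j n) Set.diff_subset, ?_, ?_, ?_⟩
    · rw [hdiffeq, measure_diff_null (hN0 j), hdiffμ j n]
      exact ENNReal.ofReal_pos.mpr (sub_pos.mpr (hTlt j n))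
    · rw [hdiffeq, measure_diff_null (hN0 j), hdiffμ j n]
      exact ENNReal.ofReal_le_ofReal (hTgap j n)
    · have hBμ : μ (B0 j n ∪ N j) = μ (B0 j n) :=
        le_antisymm ((measure_union_le _ _).trans (by rw [hN0 j, add_zero]))
          (measure_mono Set.subset_union_left)
      rw [hBμ, hB0μ j n, hT, ENNReal.ofReal_mul (Nat.cast_nonneg _), ENNReal.ofReal_natCast]
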